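/- arXiv:1612.09232 — 2 statements merged into one kernel-verified Lean document; each statement's English description precedes it below -/
import Mathlib

section
/- Let a be a real-valued function on the set P of primes such that (H0) Σ_{p∈P} |a(p)|^8 p^{-s} converges for every s>1; (H4) limsup_{s→1⁺} (Σ_{p∈P} a(p)^4 p^{-s})/log(1/(s−1)) = 2; and (HP) for every subset S of P, limsup_{s→1⁺} (Σ_{p∈S} p^{-s})/log(1/(s−1)) ≤ 1. Set A := {p ∈ P : a(p) > 0}, B := {p ∈ P : a(p) ≤ 0}, and d := limsup_{s→1⁺} (Σ_{p∈B} |a(p)|^4 p^{-s})/log(1/(s−1)). Let 0 < β < 1 and let S_β := {p ∈ A : |a(p)|^4 ≥ (2−d)β}. Then limsup_{s→1⁺} (Σ_{p∈S_β} |a(p)|^4 p^{-s})/log(1/(s−1)) ≥ (2−d)(1−β). -/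
open Filter Real Set Topology

/-- The partial Dirichlet series `∑_{p ∈ S} g(p) p^{-s}`. -/
noncomputable def primeDirichletSum (S : Set ℕ) (g : ℕ → ℝ) (s : ℝ) : ℝ :=
  ∑' p : S, g p * ((p : ℕ) : ℝ) ^ (-s)

/-- `limsup_{s → 1⁺} (∑_{p ∈ S} g(p) p^{-s}) / log(1/(s-1))`. -/
noncomputable def dirichletLimsup (S : Set ℕ) (g : ℕ → ℝ) : ℝ :=
  Filter.limsup (fun s : ℝ => primeDirichletSum S g s / Real.log (1 / (s - 1)))
    (𝓝[>] (1 : ℝ))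

lemma aux_zeta_bound {s : ℝ} (hs1 : 1 < s) (hs2 : s ≤ 2) :
    ∑' n : ℕ, (n : ℝ) ^ (-s) ≤ 2 / (s - 1) := by
  have hsum : Summable (fun n : ℕ => (n : ℝ) ^ (-s)) :=
    Real.summable_nat_rpow.mpr (by linarith)
  refine Summable.tsum_le_of_sum_le hsum fun t => ?_
  obtain ⟨N, hN⟩ := t.exists_nat_subset_range
  have hsub : t ⊆ Finset.range (N + 2) :=
    hN.trans (Finset.range_subset_range.mpr (by omega))
  have h1 : ∑ n ∈ t, (n : ℝ) ^ (-s) ≤ ∑ n ∈ Finset.range (N + 2), (n : ℝ) ^ (-s) :=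
    Finset.sum_le_sum_of_subset_of_nonneg hsub fun i _ _ => by positivity
  have hdec : ∑ n ∈ Finset.range (N + 2), (n : ℝ) ^ (-s)
      = (∑ k ∈ Finset.range N, ((k + 2 : ℕ) : ℝ) ^ (-s)) + ((1:ℕ) : ℝ) ^ (-s)
        + ((0:ℕ) : ℝ) ^ (-s) := by
    rw [Finset.sum_range_succ' (fun n : ℕ => (n : ℝ) ^ (-s)) (N + 1),
      Finset.sum_range_succ' (fun n : ℕ => ((n + 1 : ℕ) : ℝ) ^ (-s)) N]
  have h0 : ((0:ℕ) : ℝ) ^ (-s) = 0 := by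
    rw [Nat.cast_zero, Real.zero_rpow (by linarith)]
  have h1' : ((1:ℕ) : ℝ) ^ (-s) = 1 := by
    rw [Nat.cast_one, Real.one_rpow]
  -- integral bound for the tail
  have hanti : AntitoneOn (fun x : ℝ => x ^ (-s)) (Set.Icc (1:ℝ) (1 + N)) := by
    intro x hx y hy hxy
    exact Real.rpow_le_rpow_of_nonpos (lt_of_lt_of_le one_pos hx.1) hxy (by linarith)
  have hint := hanti.sum_le_integral
  have hval : ∫ x in (1:ℝ)..(1 + N), x ^ (-s)
      = ((1 + (N:ℝ)) ^ (-s + 1) - 1 ^ (-s + 1)) / (-s + 1) := by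
    apply integral_rpow
    refine Or.inr ⟨by linarith, ?_⟩
    rw [Set.uIcc_of_le (by linarith [Nat.cast_nonneg (α := ℝ) N])]
    intro h
    have := h.1
    linarith
  have htail : ∑ k ∈ Finset.range N, ((k + 2 : ℕ) : ℝ) ^ (-s) ≤ 1 / (s - 1) := by
    have heq : ∀ k : ℕ, ((k + 2 : ℕ) : ℝ) ^ (-s) = ((1:ℝ) + ((k + 1 : ℕ) : ℝ)) ^ (-s) := by
      intro k; push_cast; ring_nf
    calc ∑ k ∈ Finset.range N, ((k + 2 : ℕ) : ℝ) ^ (-s)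
        = ∑ k ∈ Finset.range N, ((1:ℝ) + ((k + 1 : ℕ) : ℝ)) ^ (-s) :=
          Finset.sum_congr rfl fun k _ => heq k
      _ ≤ ∫ x in (1:ℝ)..(1 + N), x ^ (-s) := hint
      _ = ((1 + (N:ℝ)) ^ (-s + 1) - 1 ^ (-s + 1)) / (-s + 1) := hval
      _ = (1 - (1 + (N:ℝ)) ^ (-s + 1)) / (s - 1) := by
          rw [Real.one_rpow]
          rw [div_eq_div_iff (ne_of_lt (by linarith : -s + 1 < 0)) (ne_of_gt (by linarith : (0:ℝ) < s - 1))]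
          ring
      _ ≤ 1 / (s - 1) := by
          have hNpow : 0 ≤ (1 + (N:ℝ)) ^ (-s + 1) := Real.rpow_nonneg (by positivity) _
          apply div_le_div_of_nonneg_right ?_ (by linarith)
          linarith
  have hone : (1:ℝ) ≤ 1 / (s - 1) := by
    rw [le_div_iff₀ (by linarith)]; linarith
  have : (1:ℝ) / (s-1) + 1 / (s-1) = 2 / (s-1) := by ring
  rw [hdec, h0, h1'] at h1
  linarith

lemma aux_prime_sum_bound {s : ℝ} (hs1 : 1 < s) (hs2 : s ≤ 2) (S : Set ℕ)
    (hS : ∀ p ∈ S, Nat.Prime p) :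
    ∑' p : S, ((p : ℕ) : ℝ) ^ (-s) ≤ Real.log 2 + Real.log (1 / (s - 1)) := by
  have hsum : Summable (fun n : ℕ => (n : ℝ) ^ (-s)) :=
    Real.summable_nat_rpow.mpr (by linarith)
  -- the monoid hom n ↦ n ^ (-s)
  set f : ℕ →* ℝ :=
    { toFun := fun n : ℕ => (n : ℝ) ^ (-s)
      map_one' := by simp
      map_mul' := fun m n => by
        push_cast
        exact Real.mul_rpow (Nat.cast_nonneg m) (Nat.cast_nonneg n) } with hf
  have hfsum : Summable ⇑f := hsum
  -- partial prime sums are bounded by log (2 / (s-1))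
  have key : ∀ N : ℕ, ∑ p ∈ N.primesBelow, ((p : ℕ) : ℝ) ^ (-s) ≤ Real.log (2 / (s - 1)) := by
    intro N
    have hprod := EulerProduct.prod_primesBelow_geometric_eq_tsum_smoothNumbers hfsum N
    have hexp : Real.exp (∑ p ∈ N.primesBelow, ((p : ℕ) : ℝ) ^ (-s))
        ≤ ∏ p ∈ N.primesBelow, (1 - f p)⁻¹ := by
      rw [Real.exp_sum]
      refine Finset.prod_le_prod (fun p _ => (Real.exp_pos _).le) fun p hp => ?_
      have hprime := (Nat.mem_primesBelow.mp hp).2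
      have hx0 : (0:ℝ) ≤ ((p : ℕ) : ℝ) ^ (-s) := Real.rpow_nonneg (Nat.cast_nonneg p) _
      have hx1 : ((p : ℕ) : ℝ) ^ (-s) < 1 :=
        Real.rpow_lt_one_of_one_lt_of_neg (by exact_mod_cast hprime.one_lt) (by linarith)
      set x : ℝ := ((p : ℕ) : ℝ) ^ (-s)
      have h1 : 1 - x ≤ Real.exp (-x) := by
        have := Real.add_one_le_exp (-x); linarith
      have h2 : Real.exp (-x) = (Real.exp x)⁻¹ := Real.exp_neg x
      show Real.exp x ≤ (1 - x)⁻¹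
      rw [le_inv_comm₀ (Real.exp_pos x) (by linarith)]
      rw [← h2]; exact h1
    have hsmooth : (∑' m : N.smoothNumbers, f m) ≤ ∑' n : ℕ, (n : ℝ) ^ (-s) :=
      Summable.tsum_subtype_le (fun n : ℕ => (n : ℝ) ^ (-s)) _
        (fun n => Real.rpow_nonneg (Nat.cast_nonneg n) _) hsum
    have hchain : Real.exp (∑ p ∈ N.primesBelow, ((p : ℕ) : ℝ) ^ (-s)) ≤ 2 / (s - 1) := by
      calc Real.exp (∑ p ∈ N.primesBelow, ((p : ℕ) : ℝ) ^ (-s))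
          ≤ ∏ p ∈ N.primesBelow, (1 - f p)⁻¹ := hexp
        _ = ∑' m : N.smoothNumbers, f m := hprod
        _ ≤ ∑' n : ℕ, (n : ℝ) ^ (-s) := hsmooth
        _ ≤ 2 / (s - 1) := aux_zeta_bound hs1 hs2
    exact (Real.le_log_iff_exp_le (div_pos two_pos (by linarith))).mpr hchain
  -- now bound the tsum over S
  have hsumS : Summable (fun p : S => ((p : ℕ) : ℝ) ^ (-s)) := hsum.subtype S
  have hbound : ∑' p : S, ((p : ℕ) : ℝ) ^ (-s) ≤ Real.log (2 / (s - 1)) := by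
    refine Summable.tsum_le_of_sum_le hsumS fun t => ?_
    classical
    have himg : ∑ p ∈ t.image (fun x : S => (x : ℕ)), ((p : ℕ) : ℝ) ^ (-s)
        = ∑ x ∈ t, (((x : ℕ)) : ℝ) ^ (-s) :=
      Finset.sum_image (fun x _ y _ h => Subtype.ext h)
    obtain ⟨N, hN⟩ := (t.image (fun x : S => (x : ℕ))).exists_nat_subset_range
    have hsubset : t.image (fun x : S => (x : ℕ)) ⊆ N.primesBelow := by
      intro p hp
      obtain ⟨x, hx, rfl⟩ := Finset.mem_image.mp hp
      exact Nat.mem_primesBelow.mpr ⟨Finset.mem_range.mp (hN hp), hS _ x.2⟩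
    rw [← himg]
    calc ∑ p ∈ t.image (fun x : S => (x : ℕ)), ((p : ℕ) : ℝ) ^ (-s)
        ≤ ∑ p ∈ N.primesBelow, ((p : ℕ) : ℝ) ^ (-s) :=
          Finset.sum_le_sum_of_subset_of_nonneg hsubset
            (fun i _ _ => Real.rpow_nonneg (Nat.cast_nonneg i) _)
      _ ≤ Real.log (2 / (s - 1)) := key N
  have hlog : Real.log (2 / (s - 1)) = Real.log 2 + Real.log (1 / (s - 1)) := by
    rw [Real.log_div (by norm_num) (ne_of_gt (by linarith : (0:ℝ) < s - 1)),
      Real.log_div (by norm_num) (ne_of_gt (by linarith : (0:ℝ) < s - 1)), Real.log_one]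
    ring
  linarith [hbound]

/-- With `S_β` the set of primes `p ∈ A` with `|a p|^4 ≥ (2-d)β`, the weighted density of
`|a|^4` over `S_β` is at least `(2-d)(1-β)`. -/
theorem limsup_restricted_fourth_power (a : ℕ → ℝ) (P : Set ℕ)
    (hP : P = {p : ℕ | Nat.Prime p})
    (H0 : ∀ s : ℝ, 1 < s → Summable (fun p : P => |a p| ^ 8 * ((p : ℕ) : ℝ) ^ (-s)))
    (H4 : dirichletLimsup P (fun p => a p ^ 4) = 2)
    (HP : ∀ S : Set ℕ, S ⊆ P → dirichletLimsup S (fun _ => 1) ≤ 1)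
    (A B : Set ℕ) (hA : A = {p ∈ P | 0 < a p}) (hB : B = {p ∈ P | a p ≤ 0})
    (d : ℝ) (hd : d = dirichletLimsup B (fun p => |a p| ^ 4))
    (β : ℝ) (hβ0 : 0 < β) (hβ1 : β < 1)
    (Sβ : Set ℕ) (hSβ : Sβ = {p ∈ A | (2 - d) * β ≤ |a p| ^ 4}) :
    (2 - d) * (1 - β) ≤ dirichletLimsup Sβ (fun p => |a p| ^ 4) := by
  classical
  set l : Filter ℝ := 𝓝[>] (1 : ℝ) with hl
  set w : ℕ → ℝ := fun p => |a p| ^ 4 with hw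
  set L : ℝ → ℝ := fun s => Real.log (1 / (s - 1)) with hL
  have hwnn : ∀ n : ℕ, 0 ≤ w n := fun n => by simp only [hw]; positivity
  have htnn : ∀ (n : ℕ) (t : ℝ), (0:ℝ) ≤ (n : ℝ) ^ (-t) :=
    fun n t => Real.rpow_nonneg (Nat.cast_nonneg n) _
  have hwtnn : ∀ (n : ℕ) (t : ℝ), (0:ℝ) ≤ w n * (n : ℝ) ^ (-t) :=
    fun n t => mul_nonneg (hwnn n) (htnn n t)
  -- set inclusions
  have hSβA : Sβ ⊆ A := by rw [hSβ]; exact sep_subset _ _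
  have hAP : A ⊆ P := by rw [hA]; exact sep_subset _ _
  have hBP : B ⊆ P := by rw [hB]; exact sep_subset _ _
  have hA'P : A \ Sβ ⊆ P := diff_subset.trans hAP
  have hSβP : Sβ ⊆ P := hSβA.trans hAP
  have hPAB : P = A ∪ B := by
    rw [hA, hB]; ext p
    constructor
    · intro hp
      rcases lt_or_ge 0 (a p) with h | h
      · exact Or.inl ⟨hp, h⟩
      · exact Or.inr ⟨hp, h⟩
    · rintro (⟨hp, _⟩ | ⟨hp, _⟩) <;> exact hp
  have hdisjAB : Disjoint A B := by
    rw [hA, hB, Set.disjoint_left]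
    rintro p ⟨_, h1⟩ ⟨_, h2⟩; linarith
  have hP3 : P = (Sβ ∪ (A \ Sβ)) ∪ B := by
    rw [Set.union_diff_cancel hSβA]; exact hPAB
  have hdisj1 : Disjoint (Sβ ∪ (A \ Sβ)) B := by
    rw [Set.union_diff_cancel hSβA]; exact hdisjAB
  have hdisj2 : Disjoint Sβ (A \ Sβ) := disjoint_sdiff_right
  -- summability over subsets of P
  have hsum_nat : ∀ {s : ℝ}, 1 < s → Summable (fun n : ℕ => (n : ℝ) ^ (-s)) :=
    fun hs => Real.summable_nat_rpow.mpr (by linarith)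
  have hsumP : ∀ {s : ℝ}, 1 < s →
      Summable ((fun n : ℕ => w n * (n : ℝ) ^ (-s)) ∘ (Subtype.val : P → ℕ)) := by
    intro s hs
    have h8 : Summable (fun p : P => (|a p| ^ 8 * ((p : ℕ) : ℝ) ^ (-s)
        + ((p : ℕ) : ℝ) ^ (-s)) / 2) :=
      ((H0 s hs).add ((hsum_nat hs).subtype P)).div_const 2
    refine Summable.of_nonneg_of_le (fun p => hwtnn _ _) (fun p => ?_) h8
    have ht : (0 : ℝ) ≤ ((p : ℕ) : ℝ) ^ (-s) := Real.rpow_nonneg (Nat.cast_nonneg _) _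
    have h8eq : |a (p : ℕ)| ^ 8 = (|a (p : ℕ)| ^ 4) ^ 2 := by
      rw [← pow_mul]
    have hy : (0 : ℝ) ≤ |a (p : ℕ)| ^ 4 := by positivity
    show w (p : ℕ) * ((p : ℕ) : ℝ) ^ (-s) ≤ _
    simp only [hw]
    nlinarith [sq_nonneg (|a (p : ℕ)| ^ 4 - 1), mul_nonneg (mul_nonneg hy hy) ht]
  have hsumS : ∀ {s : ℝ}, 1 < s → ∀ {S : Set ℕ}, S ⊆ P →
      Summable ((fun n : ℕ => w n * (n : ℝ) ^ (-s)) ∘ (Subtype.val : S → ℕ)) := by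
    intro s hs S hSP
    rw [summable_subtype_iff_indicator]
    have hPind := summable_subtype_iff_indicator.mp (hsumP hs)
    refine Summable.of_nonneg_of_le
      (fun n => Set.indicator_nonneg (fun m _ => hwtnn m s) n)
      (fun n => ?_) hPind
    exact Set.indicator_le_indicator_of_subset hSP (fun m => hwtnn m s) n
  have hsum1S : ∀ {s : ℝ}, 1 < s → ∀ (S : Set ℕ),
      Summable ((fun n : ℕ => (1 : ℝ) * (n : ℝ) ^ (-s)) ∘ (Subtype.val : S → ℕ)) := by
    intro s hs S
    exact ((hsum_nat hs).subtype S).congr fun p => by simp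
  -- pointwise tsum comparisons
  have hF_nonneg : ∀ (S : Set ℕ) (s : ℝ), 0 ≤ primeDirichletSum S w s :=
    fun S s => tsum_nonneg fun p => hwtnn _ _
  have hF_le : ∀ {s : ℝ}, 1 < s → ∀ {S : Set ℕ}, S ⊆ P →
      primeDirichletSum S w s ≤ primeDirichletSum P w s := by
    intro s hs S hSP
    have e1 : primeDirichletSum S w s
        = ∑' n : ℕ, S.indicator (fun n : ℕ => w n * (n : ℝ) ^ (-s)) n :=
      tsum_subtype S (fun n : ℕ => w n * (n : ℝ) ^ (-s))
    have e2 : primeDirichletSum P w s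
        = ∑' n : ℕ, P.indicator (fun n : ℕ => w n * (n : ℝ) ^ (-s)) n :=
      tsum_subtype P (fun n : ℕ => w n * (n : ℝ) ^ (-s))
    rw [e1, e2]
    refine Summable.tsum_le_tsum (fun n =>
        Set.indicator_le_indicator_of_subset hSP (fun m => hwtnn m s) n)
      (summable_subtype_iff_indicator.mp (hsumS hs hSP))
      (summable_subtype_iff_indicator.mp (hsumP hs))
  -- splitting of the sum
  have hF_split : ∀ {s : ℝ}, 1 < s →
      primeDirichletSum P w s
        = primeDirichletSum Sβ w s + primeDirichletSum (A \ Sβ) w s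
          + primeDirichletSum B w s := by
    intro s hs
    have hsb : Summable ((fun n : ℕ => w n * (n : ℝ) ^ (-s)) ∘
        (Subtype.val : (Sβ ∪ (A \ Sβ) : Set ℕ) → ℕ)) :=
      hsumS hs (Set.union_subset hSβP hA'P)
    simp only [primeDirichletSum]
    rw [hP3]
    rw [Summable.tsum_union_disjoint hdisj1 hsb (hsumS hs hBP),
      Summable.tsum_union_disjoint hdisj2 (hsumS hs hSβP) (hsumS hs hA'P)]
  -- basic facts about the filter
  have hev : ∀ᶠ s in l, s ∈ Set.Ioo (1:ℝ) (3/2) :=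
    Ioo_mem_nhdsGT_of_mem ⟨le_refl 1, by norm_num⟩
  have hLpos : ∀ {s : ℝ}, s ∈ Set.Ioo (1:ℝ) (3/2) → 0 < L s := by
    intro s hs
    apply Real.log_pos
    rw [lt_div_iff₀ (by linarith [hs.1])]
    linarith [hs.2]
  have hLlog2 : ∀ {s : ℝ}, s ∈ Set.Ioo (1:ℝ) (3/2) → Real.log 2 ≤ L s := by
    intro s hs
    apply Real.log_le_log (by norm_num)
    rw [le_div_iff₀ (by linarith [hs.1])]
    linarith [hs.2]
  -- u S as limsup argument
  have hu_def : ∀ S : Set ℕ, dirichletLimsup S w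
      = limsup (fun s => primeDirichletSum S w s / L s) l := fun S => rfl
  have hwP : ∀ p : ℕ, w p = a p ^ 4 := fun p => by
    simp only [hw]
    rw [← abs_pow, abs_of_nonneg (by positivity : (0:ℝ) ≤ a p ^ 4)]
  have H4' : limsup (fun s => primeDirichletSum P w s / L s) l = 2 := by
    rw [← hu_def]
    rw [show dirichletLimsup P w = dirichletLimsup P (fun p => a p ^ 4) by
      unfold dirichletLimsup primeDirichletSum
      congr 1
      funext s
      congr 1
      exact tsum_congr fun p => by simp only [hwP]]
    exact H4
  -- nonnegativity eventually
  have h0le : ∀ S : Set ℕ, ∀ᶠ s in l, 0 ≤ primeDirichletSum S w s / L s := by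
    intro S
    filter_upwards [hev] with s hs
    exact div_nonneg (hF_nonneg S s) (hLpos hs).le
  -- boundedness of u P
  have hbP : IsBoundedUnder (· ≤ ·) l (fun s => primeDirichletSum P w s / L s) := by
    by_contra hc
    have hempty : {c : ℝ | ∀ᶠ s in l, primeDirichletSum P w s / L s ≤ c} = ∅ := by
      rw [Set.eq_empty_iff_forall_notMem]
      intro c hcmem
      exact hc ⟨c, eventually_map.mpr hcmem⟩
    rw [Filter.limsup_eq, hempty, Real.sInf_empty] at H4'
    norm_num at H4'
  have hble : ∀ {S : Set ℕ}, S ⊆ P →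
      (fun s => primeDirichletSum S w s / L s) ≤ᶠ[l]
        (fun s => primeDirichletSum P w s / L s) := by
    intro S hSP
    filter_upwards [hev] with s hs
    exact div_le_div_of_nonneg_right (hF_le hs.1 hSP) (hLpos hs).le
  have hbS : ∀ {S : Set ℕ}, S ⊆ P →
      IsBoundedUnder (· ≤ ·) l (fun s => primeDirichletSum S w s / L s) := by
    intro S hSP
    obtain ⟨b, hb⟩ := hbP
    refine ⟨b, ?_⟩
    rw [eventually_map] at hb ⊢
    filter_upwards [hb, hble hSP] with s h1 h2
    exact h2.trans h1
  have hcoS : ∀ S : Set ℕ,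
      IsCoboundedUnder (· ≤ ·) l (fun s => primeDirichletSum S w s / L s) :=
    fun S => (isBoundedUnder_of_eventually_ge (h0le S)).isCoboundedUnder_le
  have hgeS : ∀ S : Set ℕ,
      IsBoundedUnder (· ≥ ·) l (fun s => primeDirichletSum S w s / L s) :=
    fun S => isBoundedUnder_of_eventually_ge (h0le S)
  -- d ≤ 2 and 0 ≤ d not needed; d ≤ 2:
  have hd2 : d ≤ 2 := by
    rw [hd, hu_def B, ← H4']
    exact Filter.limsup_le_limsup (hble hBP) (hcoS B) hbP
  set c : ℝ := (2 - d) * β with hc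
  have hc0 : 0 ≤ c := mul_nonneg (by linarith) hβ0.le
  -- bound for the A \ Sβ part
  have hY : limsup (fun s => primeDirichletSum (A \ Sβ) w s / L s) l ≤ c := by
    set v : ℝ → ℝ := fun s => primeDirichletSum (A \ Sβ) (fun _ => (1:ℝ)) s / L s with hv
    have hG_nonneg : ∀ s : ℝ, 0 ≤ primeDirichletSum (A \ Sβ) (fun _ => (1:ℝ)) s :=
      fun s => tsum_nonneg fun p => mul_nonneg (by norm_num) (htnn _ _)
    have hvnonneg : ∀ᶠ s in l, 0 ≤ v s := by
      filter_upwards [hev] with s hs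
      exact div_nonneg (hG_nonneg s) (hLpos hs).le
    have hvbound : ∀ᶠ s in l, v s ≤ 2 := by
      filter_upwards [hev] with s hs
      have hGle : primeDirichletSum (A \ Sβ) (fun _ => (1:ℝ)) s ≤ Real.log 2 + L s := by
        have : primeDirichletSum (A \ Sβ) (fun _ => (1:ℝ)) s
            = ∑' p : (A \ Sβ : Set ℕ), ((p : ℕ) : ℝ) ^ (-s) :=
          tsum_congr fun p => one_mul _
        rw [this]
        exact aux_prime_sum_bound hs.1 (by linarith [hs.2]) _
          (fun p hp => by rw [hP] at hA'P; exact hA'P hp)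
      rw [hv]
      rw [div_le_iff₀ (hLpos hs)]
      have := hLlog2 hs
      linarith
    have hvb : IsBoundedUnder (· ≤ ·) l v := isBoundedUnder_of_eventually_le hvbound
    have hpoint : ∀ᶠ s in l, primeDirichletSum (A \ Sβ) w s / L s ≤ c * v s := by
      filter_upwards [hev] with s hs
      have hFle : primeDirichletSum (A \ Sβ) w s
          ≤ c * primeDirichletSum (A \ Sβ) (fun _ => (1:ℝ)) s := by
        rw [show c * primeDirichletSum (A \ Sβ) (fun _ => (1:ℝ)) s
            = ∑' p : (A \ Sβ : Set ℕ), c * ((1:ℝ) * ((p : ℕ) : ℝ) ^ (-s)) from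
          (tsum_mul_left).symm]
        refine Summable.tsum_le_tsum (fun p => ?_) (hsumS hs.1 hA'P)
          ((hsum1S hs.1 (A \ Sβ)).mul_left c)
        have hp := p.2
        have hpA : (p : ℕ) ∈ A := hp.1
        have hpnot : (p : ℕ) ∉ Sβ := hp.2
        have hwlt : w (p : ℕ) ≤ c := by
          by_contra hcon
          push_neg at hcon
          refine hpnot ((Set.ext_iff.mp hSβ (p : ℕ)).mpr ⟨hpA, ?_⟩)
          have := hcon.le
          simp only [hw] at this
          exact this
        have ht : (0:ℝ) ≤ ((p : ℕ) : ℝ) ^ (-s) := Real.rpow_nonneg (Nat.cast_nonneg _) _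
        calc w (p : ℕ) * ((p : ℕ) : ℝ) ^ (-s) ≤ c * ((p : ℕ) : ℝ) ^ (-s) :=
              mul_le_mul_of_nonneg_right hwlt ht
          _ = c * ((1:ℝ) * ((p : ℕ) : ℝ) ^ (-s)) := by rw [one_mul]
      show primeDirichletSum (A \ Sβ) w s / L s
        ≤ c * (primeDirichletSum (A \ Sβ) (fun _ => (1:ℝ)) s / L s)
      rw [show c * (primeDirichletSum (A \ Sβ) (fun _ => (1:ℝ)) s / L s)
          = c * primeDirichletSum (A \ Sβ) (fun _ => (1:ℝ)) s / L s from
        (mul_div_assoc _ _ _).symm]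
      exact div_le_div_of_nonneg_right hFle (hLpos hs).le
    have hcv_bdd : IsBoundedUnder (· ≤ ·) l (fun s => c * v s) := by
      refine isBoundedUnder_of_eventually_le (a := c * 2) ?_
      filter_upwards [hvbound] with s hs
      exact mul_le_mul_of_nonneg_left hs hc0
    have step1 : limsup (fun s => primeDirichletSum (A \ Sβ) w s / L s) l
        ≤ limsup (fun s => c * v s) l :=
      Filter.limsup_le_limsup hpoint (hcoS (A \ Sβ)) hcv_bdd
    have step2 : limsup (fun s => c * v s) l ≤ c * limsup v l := by
      have := limsup_mul_le (f := l) (u := fun _ => c) (v := v)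
        (Eventually.of_forall fun _ => hc0).frequently (isBoundedUnder_const) 
        hvnonneg hvb
      rw [Filter.limsup_const c] at this
      exact this
    have step3 : limsup v l ≤ 1 := HP (A \ Sβ) hA'P
    calc limsup (fun s => primeDirichletSum (A \ Sβ) w s / L s) l
        ≤ c * limsup v l := step1.trans step2
      _ ≤ c * 1 := mul_le_mul_of_nonneg_left step3 hc0
      _ = c := mul_one c
  -- the splitting of limsups
  have hsplit_ev : (fun s => primeDirichletSum P w s / L s) =ᶠ[l]
      ((fun s => primeDirichletSum Sβ w s / L s)
        + ((fun s => primeDirichletSum (A \ Sβ) w s / L s)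
          + (fun s => primeDirichletSum B w s / L s))) := by
    filter_upwards [hev] with s hs
    show primeDirichletSum P w s / L s = _
    rw [hF_split hs.1]
    simp only [Pi.add_apply]
    ring
  have hsum_bdd : IsBoundedUnder (· ≤ ·) l
      ((fun s => primeDirichletSum (A \ Sβ) w s / L s)
        + (fun s => primeDirichletSum B w s / L s)) := by
    obtain ⟨b1, h1⟩ := hbS hA'P
    obtain ⟨b2, h2⟩ := hbS hBP
    refine ⟨b1 + b2, ?_⟩
    rw [eventually_map] at h1 h2 ⊢
    filter_upwards [h1, h2] with s hs1 hs2
    exact add_le_add hs1 hs2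
  have hsum_co : IsCoboundedUnder (· ≤ ·) l
      ((fun s => primeDirichletSum (A \ Sβ) w s / L s)
        + (fun s => primeDirichletSum B w s / L s)) := by
    refine (isBoundedUnder_of_eventually_ge (a := (0:ℝ)) ?_).isCoboundedUnder_le
    filter_upwards [h0le (A \ Sβ), h0le B] with s h1 h2
    exact add_nonneg h1 h2
  have c1 : (2:ℝ) ≤ limsup (fun s => primeDirichletSum Sβ w s / L s) l
      + limsup ((fun s => primeDirichletSum (A \ Sβ) w s / L s)
        + (fun s => primeDirichletSum B w s / L s)) l := by
    rw [← H4', limsup_congr hsplit_ev]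
    exact limsup_add_le (hgeS Sβ) (hbS hSβP) hsum_co hsum_bdd
  have c2 : limsup ((fun s => primeDirichletSum (A \ Sβ) w s / L s)
        + (fun s => primeDirichletSum B w s / L s)) l
      ≤ limsup (fun s => primeDirichletSum (A \ Sβ) w s / L s) l
        + limsup (fun s => primeDirichletSum B w s / L s) l :=
    limsup_add_le (hgeS (A \ Sβ)) (hbS hA'P) (hcoS B) (hbS hBP)
  have hdB : limsup (fun s => primeDirichletSum B w s / L s) l = d := (hd.symm ▸ rfl)
  have hgoal : dirichletLimsup Sβ w
      = limsup (fun s => primeDirichletSum Sβ w s / L s) l := hu_def Sβ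
  rw [hgoal]
  have hexp : (2 - d) * (1 - β) = 2 - d - (2 - d) * β := by ring
  rw [hexp]
  have := hY
  rw [hdB] at c2
  linarith
end

section
/- For every real number d with 1.258 < d ≤ 2, define c(d) := d^{5/4} / (14 − (2−d)^2)^{1/4} and α(d) := ((2−d)·0.495)^{3/4} · (14 − (2−d)^2)^{1/4} / d^{5/4}. Then 0 ≤ α(d) < 1 and c(d)^2 · (1 − α(d))^2 > 5/100. -/
open Real

private lemma quarter_le (x q : ℝ) (hx : 0 ≤ x) (hq : 0 ≤ q) (h : x ≤ q ^ 4) :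
    x ^ ((1 : ℝ) / 4) ≤ q := by
  have h1 : x ^ ((1 : ℝ) / 4) ≤ (q ^ 4) ^ ((1 : ℝ) / 4) :=
    Real.rpow_le_rpow hx h (by norm_num)
  have h2 : (q ^ 4) ^ ((1 : ℝ) / 4) = q := by
    rw [← Real.rpow_natCast q 4, ← Real.rpow_mul hq]
    norm_num
  linarith [h1, h2.le, h2.ge]

private lemma quarter_ge (x q : ℝ) (hq : 0 ≤ q) (h : q ^ 4 ≤ x) :
    q ≤ x ^ ((1 : ℝ) / 4) := by
  have h1 : (q ^ 4) ^ ((1 : ℝ) / 4) ≤ x ^ ((1 : ℝ) / 4) :=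
    Real.rpow_le_rpow (by positivity) h (by norm_num)
  have h2 : (q ^ 4) ^ ((1 : ℝ) / 4) = q := by
    rw [← Real.rpow_natCast q 4, ← Real.rpow_mul hq]
    norm_num
  linarith [h1, h2.le, h2.ge]

private lemma e54 (d : ℝ) (hd : 0 ≤ d) : d ^ ((5 : ℝ) / 4) = (d ^ 5) ^ ((1 : ℝ) / 4) := by
  rw [← Real.rpow_natCast d 5, ← Real.rpow_mul hd]
  norm_num

private lemma e34 (x : ℝ) (hx : 0 ≤ x) : x ^ ((3 : ℝ) / 4) = (x ^ 3) ^ ((1 : ℝ) / 4) := by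
  rw [← Real.rpow_natCast x 3, ← Real.rpow_mul hx]
  norm_num

private lemma key_step (d a b L M U : ℝ) (had : a ≤ d) (hdb : d ≤ b) (hb : b ≤ 2)
    (ha1 : 1 ≤ a) (hL : 0 ≤ L) (hM : 0 < M) (hU : 0 ≤ U)
    (hL4 : L ^ 4 ≤ a ^ 5) (hM4 : 14 - (2 - b) ^ 2 ≤ M ^ 4)
    (hU4 : ((2 - a) * 0.495) ^ 3 ≤ U ^ 4)
    (hmain : (0.22361 + U) * M < L) :
    0.22361 + ((2 - d) * 0.495) ^ ((3 : ℝ) / 4) <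
      d ^ ((5 : ℝ) / 4) / (14 - (2 - d) ^ 2) ^ ((1 : ℝ) / 4) := by
  have hd0 : (0 : ℝ) ≤ d := by linarith
  have hw0 : (0 : ℝ) ≤ (2 - d) * 0.495 := by nlinarith
  have hB : (0 : ℝ) < 14 - (2 - d) ^ 2 := by nlinarith
  -- upper bound for w
  have hwU : ((2 - d) * 0.495) ^ ((3 : ℝ) / 4) ≤ U := by
    rw [e34 _ hw0]
    apply quarter_le _ _ (by positivity) hU
    calc ((2 - d) * 0.495) ^ 3 ≤ ((2 - a) * 0.495) ^ 3 :=
        pow_le_pow_left₀ hw0 (by linarith) 3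
      _ ≤ U ^ 4 := hU4
  -- upper bound for B^{1/4}
  have hBM : (14 - (2 - d) ^ 2) ^ ((1 : ℝ) / 4) ≤ M := by
    apply quarter_le _ _ hB.le hM.le
    nlinarith
  -- lower bound for d^{5/4}
  have hdL : L ≤ d ^ ((5 : ℝ) / 4) := by
    rw [e54 d hd0]
    exact quarter_ge _ _ hL (hL4.trans (pow_le_pow_left₀ (by linarith) had 5))
  have hB14 : (0 : ℝ) < (14 - (2 - d) ^ 2) ^ ((1 : ℝ) / 4) := Real.rpow_pos_of_pos hB _
  have hdiv : L / M ≤ d ^ ((5 : ℝ) / 4) / (14 - (2 - d) ^ 2) ^ ((1 : ℝ) / 4) :=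
    div_le_div₀ (le_trans hL hdL) hdL hB14 hBM
  have hLM : 0.22361 + U < L / M := (lt_div_iff₀ hM).mpr hmain
  linarith

/-- For `1.258 < d ≤ 2`, with `c = d^{5/4}/(14-(2-d)^2)^{1/4}` and
`α = ((2-d)·0.495)^{3/4}·(14-(2-d)^2)^{1/4}/d^{5/4}`, one has `0 ≤ α < 1` and
`c^2 (1-α)^2 > 5/100`. -/
theorem numeric_alpha_inequality (d : ℝ) (hd0 : 1.258 < d) (hd1 : d ≤ 2)
    (c α : ℝ)
    (hc : c = d ^ ((5 : ℝ) / 4) / (14 - (2 - d) ^ 2) ^ ((1 : ℝ) / 4))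
    (hα : α = ((2 - d) * 0.495) ^ ((3 : ℝ) / 4) * (14 - (2 - d) ^ 2) ^ ((1 : ℝ) / 4) /
      d ^ ((5 : ℝ) / 4)) :
    (0 ≤ α ∧ α < 1) ∧ c ^ 2 * (1 - α) ^ 2 > 5 / 100 := by
  have hdpos : (0 : ℝ) < d := lt_trans (by norm_num) hd0
  have hw0 : (0 : ℝ) ≤ (2 - d) * 0.495 := by nlinarith
  have hB : (0 : ℝ) < 14 - (2 - d) ^ 2 := by nlinarith
  have hB14 : (0 : ℝ) < (14 - (2 - d) ^ 2) ^ ((1 : ℝ) / 4) := Real.rpow_pos_of_pos hB _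
  have hd54 : (0 : ℝ) < d ^ ((5 : ℝ) / 4) := Real.rpow_pos_of_pos hdpos _
  set w : ℝ := ((2 - d) * 0.495) ^ ((3 : ℝ) / 4) with hwdef
  have hwnn : 0 ≤ w := Real.rpow_nonneg hw0 _
  have hcpos : 0 < c := by rw [hc]; positivity
  have hca : c * α = w := by
    rw [hc, hα]
    field_simp
  -- the key numeric inequality via two intervals
  have key : 0.22361 + w < c := by
    rw [hc, hwdef]
    rcases le_or_gt d (2547 / 2000) with h | h
    · exact key_step d (629 / 500) (2547 / 2000) (166537 / 125000) (957921 / 500000)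
        (471799 / 1000000) (by linarith) h (by norm_num)
        (by norm_num) (by norm_num) (by norm_num) (by norm_num)
        (by norm_num) (by norm_num) (by norm_num) (by norm_num)
    · exact key_step d (2547 / 2000) 2 (1352847 / 1000000) (1934337 / 1000000)
        (116097 / 250000) h.le hd1 le_rfl
        (by norm_num) (by norm_num) (by norm_num) (by norm_num)
        (by norm_num) (by norm_num) (by norm_num) (by norm_num)
  have hα0 : 0 ≤ α := by
    rw [hα]
    positivity
  have hα1 : α < 1 := by
    have hwc : c * α < c * 1 := by rw [hca, mul_one]; linarith
    exact lt_of_mul_lt_mul_left hwc hcpos.le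
  refine ⟨⟨hα0, hα1⟩, ?_⟩
  have hcw : c * (1 - α) = c - w := by rw [mul_sub, mul_one, hca]
  have h1 : (0.22361 : ℝ) < c - w := by linarith
  have h2 : c ^ 2 * (1 - α) ^ 2 = (c - w) ^ 2 := by rw [← hcw]; ring
  rw [h2]
  nlinarith [h1]
end
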